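/- arXiv:2309.16829 — 2 statements merged into one kernel-verified Lean document; each statement's English description precedes it below -/
import Mathlib

section
/- Let k ≥ 1, V ∈ ℝ^k, and Δt > 0. Then the Gaussian first absolute moment with mean −V·Δt and variance Δt·I satisfies ∫_{ℝ^k} ‖z‖·f_{−V·Δt, Δt}(z) dz ≤ k·√(2/π)·√Δt·exp(−‖V‖²·Δt/2) + k·‖V‖·Δt. -/
open MeasureTheory Real
open Set Filter

lemma intIoi {b : ℝ} (hb : 0 < b) :
    ∫ r : ℝ in Ioi 0, r * Real.exp (-b * r ^ 2) = (2 * b)⁻¹ := by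
  have hb' : b ≠ 0 := hb.ne'
  have A : ∀ x : ℝ, HasDerivAt (fun x => -(2 * b)⁻¹ * Real.exp (-b * x ^ 2))
      (x * Real.exp (-b * x ^ 2)) x := by
    intro x
    convert ((hasDerivAt_pow 2 x).const_mul (-b)).exp.const_mul (-(2 * b)⁻¹) using 1
    · rfl
    · rfl
    field_simp
    ring
  have B : Tendsto (fun y : ℝ => -(2 * b)⁻¹ * Real.exp (-b * y ^ 2)) atTop
      (nhds (-(2 * b)⁻¹ * 0)) := by
    refine Tendsto.const_mul _ ?_
    exact Real.tendsto_exp_atBot.comp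
      ((tendsto_pow_atTop two_ne_zero).const_mul_atTop_of_neg (neg_lt_zero.2 hb))
  have := integral_Ioi_of_hasDerivAt_of_tendsto' (a := 0) (fun x _ => A x)
    (integrable_mul_exp_neg_mul_sq hb).integrableOn B
  simpa using this

lemma intOdd {b : ℝ} (hb : 0 < b) :
    ∫ x : ℝ, x * Real.exp (-b * x ^ 2) = 0 := by
  have h := integral_neg_eq_self (fun x : ℝ => x * Real.exp (-b * x ^ 2)) volume
  have e : ∀ x : ℝ, (-x) * Real.exp (-b * (-x) ^ 2) = -(x * Real.exp (-b * x ^ 2)) := by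
    intro x; rw [neg_sq]; ring
  simp only [e, integral_neg] at h
  linarith

lemma integrable_shift_mul {b m : ℝ} (hb : 0 < b) :
    Integrable (fun x : ℝ => x * Real.exp (-b * (x - m) ^ 2)) := by
  have h1 : Integrable (fun x : ℝ => (x - m) * Real.exp (-b * (x - m) ^ 2)) :=
    (integrable_mul_exp_neg_mul_sq hb).comp_sub_right m
  have h2 : Integrable (fun x : ℝ => m * Real.exp (-b * (x - m) ^ 2)) :=
    (((integrable_exp_neg_mul_sq hb).comp_sub_right m)).const_mul m
  have e : (fun x : ℝ => x * Real.exp (-b * (x - m) ^ 2))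
      = fun x : ℝ => (x - m) * Real.exp (-b * (x - m) ^ 2) + m * Real.exp (-b * (x - m) ^ 2) := by
    ext x; ring
  rw [e]; exact h1.add h2

lemma integrable_exp_shift {b m : ℝ} (hb : 0 < b) :
    Integrable (fun x : ℝ => Real.exp (-b * (x - m) ^ 2)) :=
  (integrable_exp_neg_mul_sq hb).comp_sub_right m

lemma integrable_abs_mul {b m : ℝ} (hb : 0 < b) :
    Integrable (fun x : ℝ => |x| * Real.exp (-b * (x - m) ^ 2)) := by
  have := (integrable_shift_mul (m := m) hb).abs
  convert this using 1
  ext x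
  rw [abs_mul, abs_of_pos (Real.exp_pos _)]

lemma intMean {b m : ℝ} (hb : 0 < b) :
    ∫ x : ℝ, x * Real.exp (-b * (x - m) ^ 2) = m * Real.sqrt (π / b) := by
  have h := MeasureTheory.integral_add_right_eq_self (μ := volume)
    (fun x : ℝ => x * Real.exp (-b * (x - m) ^ 2)) m
  rw [← h]
  simp only [add_sub_cancel_right]
  have : ∀ x : ℝ, (x + m) * Real.exp (-b * x ^ 2)
      = x * Real.exp (-b * x ^ 2) + m * Real.exp (-b * x ^ 2) := fun x => by ring
  simp_rw [this]
  rw [integral_add (integrable_mul_exp_neg_mul_sq hb)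
    ((integrable_exp_neg_mul_sq hb).const_mul m), intOdd hb, integral_const_mul,
    integral_gaussian, zero_add]

lemma negpart_eq {b m : ℝ} :
    (fun x : ℝ => max (-x) 0 * Real.exp (-b * (x - m) ^ 2))
      = (Iic (0:ℝ)).indicator (fun x => -x * Real.exp (-b * (x - m) ^ 2)) := by
  ext x
  rcases le_or_gt x 0 with h | h
  · rw [indicator_of_mem (mem_Iic.2 h)]
    rw [max_eq_left (by linarith)]
  · rw [indicator_of_notMem (by simp [h])]
    rw [max_eq_right (by linarith)]
    ring

lemma abs_moment_nonneg {b m : ℝ} (hb : 0 < b) (hm : 0 ≤ m) :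
    ∫ x : ℝ, |x| * Real.exp (-b * (x - m) ^ 2)
      ≤ m * Real.sqrt (π / b) + Real.exp (-b * m ^ 2) * b⁻¹ := by
  have habs : ∀ x : ℝ, |x| = x + 2 * max (-x) 0 := by
    intro x
    rcases le_or_gt 0 x with h | h
    · rw [abs_of_nonneg h, max_eq_right (by linarith)]; ring
    · rw [abs_of_neg h, max_eq_left (by linarith)]; ring
  have hi2 : Integrable ((Iic (0:ℝ)).indicator
      (fun x => -x * Real.exp (-b * (x - m) ^ 2))) :=
    ((integrable_shift_mul (m := m) hb).neg.congr (by exact ae_of_all _ fun x => by simp)).indicator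
      measurableSet_Iic
  have hsplit : ∫ x : ℝ, |x| * Real.exp (-b * (x - m) ^ 2)
      = (∫ x : ℝ, x * Real.exp (-b * (x - m) ^ 2))
        + 2 * ∫ x in Iic (0:ℝ), -x * Real.exp (-b * (x - m) ^ 2) := by
    have : (fun x : ℝ => |x| * Real.exp (-b * (x - m) ^ 2))
        = fun x : ℝ => x * Real.exp (-b * (x - m) ^ 2)
          + 2 * ((Iic (0:ℝ)).indicator (fun x => -x * Real.exp (-b * (x - m) ^ 2)) x) := by
      ext x
      rw [← negpart_eq]
      rw [habs x]; ring
    rw [this, integral_add (integrable_shift_mul hb) (hi2.const_mul 2),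
      integral_const_mul, integral_indicator measurableSet_Iic]
  rw [hsplit, intMean hb]
  have key : 2 * (∫ x in Iic (0:ℝ), -x * Real.exp (-b * (x - m) ^ 2))
      ≤ Real.exp (-b * m ^ 2) * b⁻¹ := ?_
  · linarith
  have hc : (∫ x in Iic (0:ℝ), -x * Real.exp (-b * (x - m) ^ 2))
      = ∫ y in Ioi (0:ℝ), y * Real.exp (-b * (y + m) ^ 2) := by
    have := integral_comp_neg_Iic (E := ℝ) (0:ℝ)
      (fun y => y * Real.exp (-b * (y + m) ^ 2))
    rw [neg_zero] at this
    rw [← this]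
    congr 1
    ext x
    have : (-x + m) ^ 2 = (x - m) ^ 2 := by ring
    rw [this]
  rw [hc]
  have hintR : IntegrableOn (fun y : ℝ => Real.exp (-b * m ^ 2) * (y * Real.exp (-b * y ^ 2)))
      (Ioi 0) := ((integrable_mul_exp_neg_mul_sq hb).const_mul _).integrableOn
  have hintL : IntegrableOn (fun y : ℝ => y * Real.exp (-b * (y + m) ^ 2)) (Ioi 0) := by
    have := (integrable_shift_mul (m := -m) hb)
    simp only [sub_neg_eq_add] at this
    exact this.integrableOn
  have hmono : ∫ y in Ioi (0:ℝ), y * Real.exp (-b * (y + m) ^ 2)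
      ≤ ∫ y in Ioi (0:ℝ), Real.exp (-b * m ^ 2) * (y * Real.exp (-b * y ^ 2)) := by
    refine setIntegral_mono_on hintL hintR measurableSet_Ioi ?_
    intro y hy
    rw [mem_Ioi] at hy
    have h1 : (y + m) ^ 2 = y ^ 2 + m ^ 2 + 2 * y * m := by ring
    have h2 : Real.exp (-b * (y + m) ^ 2) ≤ Real.exp (-b * m ^ 2) * Real.exp (-b * y ^ 2) := by
      rw [← Real.exp_add, Real.exp_le_exp, h1]
      nlinarith [mul_nonneg (mul_nonneg hy.le hm) hb.le]
    calc y * Real.exp (-b * (y + m) ^ 2)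
        ≤ y * (Real.exp (-b * m ^ 2) * Real.exp (-b * y ^ 2)) := by
          exact mul_le_mul_of_nonneg_left h2 hy.le
      _ = Real.exp (-b * m ^ 2) * (y * Real.exp (-b * y ^ 2)) := by ring
  calc (2:ℝ) * ∫ y in Ioi (0:ℝ), y * Real.exp (-b * (y + m) ^ 2)
      ≤ 2 * ∫ y in Ioi (0:ℝ), Real.exp (-b * m ^ 2) * (y * Real.exp (-b * y ^ 2)) := by
        linarith [hmono]
    _ = Real.exp (-b * m ^ 2) * b⁻¹ := by
        rw [integral_const_mul, intIoi hb]
        field_simp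

lemma abs_moment_bound {b m : ℝ} (hb : 0 < b) :
    ∫ x : ℝ, |x| * Real.exp (-b * (x - m) ^ 2)
      ≤ |m| * Real.sqrt (π / b) + Real.exp (-b * m ^ 2) * b⁻¹ := by
  rcases le_or_gt 0 m with hm | hm
  · rw [abs_of_nonneg hm]; exact abs_moment_nonneg hb hm
  · have h := integral_neg_eq_self (fun x : ℝ => |x| * Real.exp (-b * (x - m) ^ 2)) volume
    have e : ∀ x : ℝ, |(-x)| * Real.exp (-b * (-x - m) ^ 2)
        = |x| * Real.exp (-b * (x - -m) ^ 2) := by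
      intro x
      rw [abs_neg]
      congr 2
      ring
    simp only [e] at h
    rw [← h]
    have h2 := abs_moment_nonneg (m := -m) hb (by linarith)
    rw [abs_of_neg hm]
    calc ∫ x : ℝ, |x| * Real.exp (-b * (x - -m) ^ 2)
        ≤ -m * Real.sqrt (π / b) + Real.exp (-b * (-m) ^ 2) * b⁻¹ := h2
      _ = -m * Real.sqrt (π / b) + Real.exp (-b * m ^ 2) * b⁻¹ := by rw [neg_sq]

lemma exp_neg_sq_lipschitz {u w : ℝ} (hu : 0 ≤ u) (huw : u ≤ w) :
    Real.exp (-u ^ 2) - Real.exp (-w ^ 2) ≤ w - u := by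
  have hd : ∀ x : ℝ, HasDerivAt (fun t : ℝ => Real.exp (-t ^ 2))
      (Real.exp (-x ^ 2) * -(2 * x)) x := by
    intro x
    have := ((hasDerivAt_pow 2 x).neg).exp
    simpa [pow_one] using this
  have key := norm_image_sub_le_of_norm_deriv_le_segment'
    (f := fun t : ℝ => Real.exp (-t ^ 2)) (f' := fun x => Real.exp (-x ^ 2) * -(2 * x))
    (a := u) (b := w) (C := 1)
    (fun x _ => (hd x).hasDerivWithinAt) ?_ w (right_mem_Icc.2 huw)
  · have := key
    rw [Real.norm_eq_abs] at this
    have h2 := abs_le.1 this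
    linarith [h2.1]
  · intro x hx
    have hx0 : 0 ≤ x := le_trans hu hx.1
    rw [Real.norm_eq_abs, abs_mul, abs_neg, abs_of_pos (Real.exp_pos _),
      abs_of_nonneg (by linarith : (0:ℝ) ≤ 2 * x)]
    have h1 : 2 * x ≤ Real.exp (x ^ 2) := by
      have := Real.add_one_le_exp (x ^ 2)
      nlinarith [sq_nonneg (x - 1)]
    rw [Real.exp_neg]
    rw [← div_eq_inv_mul (2 * x) _, div_le_one (Real.exp_pos _)]
    exact h1

lemma sqrt_exp_key {a c : ℝ} (ha : 0 ≤ a) (hac : a ≤ c) :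
    Real.exp (-a) - Real.exp (-c) ≤ Real.sqrt π * (Real.sqrt c - Real.sqrt a) := by
  have hc : 0 ≤ c := le_trans ha hac
  have h1 : Real.sqrt a ≤ Real.sqrt c := Real.sqrt_le_sqrt hac
  have h2 : Real.exp (-Real.sqrt a ^ 2) - Real.exp (-Real.sqrt c ^ 2)
      ≤ Real.sqrt c - Real.sqrt a := exp_neg_sq_lipschitz (Real.sqrt_nonneg a) h1
  rw [Real.sq_sqrt ha, Real.sq_sqrt hc] at h2
  have hpi : (1:ℝ) ≤ Real.sqrt π := by
    rw [show (1:ℝ) = Real.sqrt 1 by simp]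
    exact Real.sqrt_le_sqrt (by linarith [Real.pi_gt_three])
  nlinarith [Real.sqrt_nonneg c, Real.sqrt_nonneg a]

lemma gauss_norm_lemma {Δt : ℝ} (hΔt : 0 < Δt) :
    (2 * π * Δt) ^ (-(1:ℝ)/2) = (Real.sqrt (2 * π * Δt))⁻¹ := by
  have h : (0:ℝ) < 2 * π * Δt := by positivity
  rw [show (-(1:ℝ)/2) = -(1/2 : ℝ) by norm_num, Real.rpow_neg h.le, Real.sqrt_eq_rpow]

lemma gauss_norm_one {Δt m : ℝ} (hΔt : 0 < Δt) :
    ∫ t : ℝ, (2 * π * Δt) ^ (-(1:ℝ)/2) * Real.exp (-(2*Δt)⁻¹ * (t - m) ^ 2) = 1 := by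
  rw [integral_const_mul]
  have h1 : ∫ t : ℝ, Real.exp (-(2*Δt)⁻¹ * (t - m) ^ 2)
      = ∫ t : ℝ, Real.exp (-(2*Δt)⁻¹ * t ^ 2) :=
    MeasureTheory.integral_sub_right_eq_self (μ := volume)
      (fun t => Real.exp (-(2*Δt)⁻¹ * t ^ 2)) m
  rw [h1, integral_gaussian, gauss_norm_lemma hΔt]
  rw [show π / (2*Δt)⁻¹ = 2 * π * Δt by field_simp]
  rw [inv_mul_cancel₀]
  positivity

lemma percoord {Δt s S : ℝ} (hΔt : 0 < Δt) (hs : 0 ≤ s) (hsS : s ≤ S) :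
    Δt * s + Real.sqrt (2*Δt/π) * Real.exp (-(Δt * s^2/2))
      ≤ Real.sqrt (2/π) * Real.sqrt Δt * Real.exp (-(Δt * S^2/2)) + S * Δt := by
  have hS : 0 ≤ S := hs.trans hsS
  set a := Δt * s^2/2 with ha_def
  set c := Δt * S^2/2 with hc_def
  have ha : 0 ≤ a := by positivity
  have hac : a ≤ c := by
    rw [ha_def, hc_def]
    have h := mul_self_le_mul_self hs hsS
    nlinarith
  have key := sqrt_exp_key ha hac
  have h2 : (0:ℝ) < Real.sqrt 2 := Real.sqrt_pos.2 (by norm_num)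
  have hp : (0:ℝ) < Real.sqrt π := Real.sqrt_pos.2 Real.pi_pos
  have hts : (0:ℝ) < Real.sqrt Δt := Real.sqrt_pos.2 hΔt
  have hss : Real.sqrt Δt * Real.sqrt Δt = Δt := Real.mul_self_sqrt hΔt.le
  have hsa : Real.sqrt a = Real.sqrt Δt * s / Real.sqrt 2 := by
    rw [show a = (Real.sqrt Δt * s / Real.sqrt 2)^2 by
      rw [div_pow, mul_pow, Real.sq_sqrt hΔt.le, Real.sq_sqrt (by norm_num : (0:ℝ) ≤ 2)]]
    exact Real.sqrt_sq (by positivity)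
  have hsc : Real.sqrt c = Real.sqrt Δt * S / Real.sqrt 2 := by
    rw [show c = (Real.sqrt Δt * S / Real.sqrt 2)^2 by
      rw [div_pow, mul_pow, Real.sq_sqrt hΔt.le, Real.sq_sqrt (by norm_num : (0:ℝ) ≤ 2)]]
    exact Real.sqrt_sq (by positivity)
  have hcoef : Real.sqrt (2*Δt/π) = Real.sqrt 2 * Real.sqrt Δt / Real.sqrt π := by
    rw [Real.sqrt_div (by positivity) π, Real.sqrt_mul (by norm_num : (0:ℝ) ≤ 2)]
  have hcoef2 : Real.sqrt (2/π) * Real.sqrt Δt = Real.sqrt 2 * Real.sqrt Δt / Real.sqrt π := by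
    rw [Real.sqrt_div (by norm_num : (0:ℝ) ≤ 2) π]
    ring
  have hΔts : Δt * s = Real.sqrt 2 * Real.sqrt Δt * Real.sqrt a := by
    rw [hsa]; field_simp; linear_combination (-s) * hss
  have hΔtS : S * Δt = Real.sqrt 2 * Real.sqrt Δt * Real.sqrt c := by
    rw [hsc]; field_simp; linear_combination (-S) * hss
  rw [hcoef, hcoef2, hΔts, hΔtS]
  have hq : (0:ℝ) ≤ Real.sqrt 2 * Real.sqrt Δt / Real.sqrt π := by positivity
  have hqq : Real.sqrt 2 * Real.sqrt Δt / Real.sqrt π * Real.sqrt π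
      = Real.sqrt 2 * Real.sqrt Δt := div_mul_cancel₀ _ hp.ne'
  have hmul := mul_le_mul_of_nonneg_left key hq
  have h4 : Real.sqrt 2 * Real.sqrt Δt / Real.sqrt π * Real.sqrt π * Real.sqrt c
      = Real.sqrt 2 * Real.sqrt Δt * Real.sqrt c := by rw [hqq]
  have h5 : Real.sqrt 2 * Real.sqrt Δt / Real.sqrt π * Real.sqrt π * Real.sqrt a
      = Real.sqrt 2 * Real.sqrt Δt * Real.sqrt a := by rw [hqq]
  nlinarith [hmul, h4, h5]


/-- Density of the multivariate normal distribution `N(μ, v·I)` on `ℝ^k`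
(with variance parameter `v = σ²`). -/
noncomputable def gaussDensity (k : ℕ) (μ : EuclideanSpace ℝ (Fin k)) (v : ℝ)
    (z : EuclideanSpace ℝ (Fin k)) : ℝ :=
  (2 * Real.pi * v) ^ (-(k : ℝ) / 2) * Real.exp (-‖z - μ‖ ^ 2 / (2 * v))

/-- The first absolute moment of the Gaussian `N(−V·Δt, Δt·I)` on `ℝ^k` is bounded by
`k·√(2/π)·√Δt·exp(−‖V‖²Δt/2) + k·‖V‖·Δt`. -/
theorem gaussian_walker_moment_bound (k : ℕ) (hk : 1 ≤ k)
    (V : EuclideanSpace ℝ (Fin k)) (Δt : ℝ) (hΔt : 0 < Δt) :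
    ∫ z : EuclideanSpace ℝ (Fin k), ‖z‖ * gaussDensity k (-(Δt • V)) Δt z ≤
      (k : ℝ) * Real.sqrt (2 / Real.pi) * Real.sqrt Δt * Real.exp (-‖V‖ ^ 2 * Δt / 2)
        + (k : ℝ) * ‖V‖ * Δt := by
  classical
  set μ : EuclideanSpace ℝ (Fin k) := -(Δt • V) with hμ
  set b : ℝ := (2 * Δt)⁻¹ with hb_def
  have hb : 0 < b := by rw [hb_def]; positivity
  set c1 : ℝ := (2 * π * Δt) ^ (-(1:ℝ)/2) with hc1
  have hc1pos : 0 < c1 := Real.rpow_pos_of_pos (by positivity) _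
  set m : Fin k → ℝ := fun i => -(Δt * V i) with hm
  set g : Fin k → ℝ → ℝ := fun i t => c1 * Real.exp (-b * (t - m i)^2) with hg
  have hμcoord : ∀ i, μ i = m i := by
    intro i
    rw [hμ, hm]
    simp [smul_eq_mul]
  -- norm squared of difference
  have hnormsub : ∀ z : EuclideanSpace ℝ (Fin k), ‖z - μ‖^2 = ∑ j, (z j - m j)^2 := by
    intro z
    rw [EuclideanSpace.norm_eq, Real.sq_sqrt (by positivity)]
    refine Finset.sum_congr rfl fun j _ => ?_
    rw [Real.norm_eq_abs, sq_abs, PiLp.sub_apply, hμcoord j]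
  have hnormz : ∀ z : EuclideanSpace ℝ (Fin k), ‖z‖ = Real.sqrt (∑ i, (z i)^2) := by
    intro z
    rw [EuclideanSpace.norm_eq]
    congr 1
    refine Finset.sum_congr rfl fun j _ => ?_
    rw [Real.norm_eq_abs, sq_abs]
  -- density factorization
  have hdens : ∀ z : EuclideanSpace ℝ (Fin k), gaussDensity k μ Δt z = ∏ i, g i (z i) := by
    intro z
    rw [gaussDensity]
    have hconst : (2 * π * Δt : ℝ) ^ (-(k:ℝ)/2) = c1 ^ k := by
      rw [hc1, ← Real.rpow_natCast ((2 * π * Δt) ^ (-(1:ℝ)/2)) k,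
        ← Real.rpow_mul (by positivity)]
      congr 1
      ring
    have hexp : -‖z - μ‖^2 / (2 * Δt) = ∑ j, -b * (z j - m j)^2 := by
      rw [hnormsub z, hb_def, neg_div, Finset.sum_div, ← Finset.sum_neg_distrib]
      refine Finset.sum_congr rfl fun j _ => ?_
      rw [div_eq_inv_mul]
      ring
    rw [hconst, hexp, Real.exp_sum, hg, Finset.prod_mul_distrib, Finset.prod_const,
      Finset.card_univ, Fintype.card_fin]
  -- H functions
  set H : Fin k → Fin k → ℝ → ℝ := fun i j t => (if j = i then |t| else 1) * g j t with hH
  have hprodH : ∀ (i : Fin k) (x : Fin k → ℝ),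
      ∏ j, H i j (x j) = |x i| * ∏ j, g j (x j) := by
    intro i x
    rw [hH]
    simp only
    rw [Finset.prod_mul_distrib]
    congr 1
    rw [Finset.prod_ite_eq' Finset.univ i (fun j => |x j|)]
    simp
  have hint_Hij : ∀ i j, Integrable (H i j) := by
    intro i j
    by_cases hji : j = i
    · subst hji
      have h0 : Integrable (fun t : ℝ => c1 * (|t| * Real.exp (-b * (t - m j)^2))) :=
        (integrable_abs_mul hb).const_mul c1
      refine h0.congr (ae_of_all _ fun t => ?_)
      simp only [hH, eq_self_iff_true, if_true]
      ring
    · have h0 : Integrable (fun t : ℝ => c1 * Real.exp (-b * (t - m j)^2)) :=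
        (integrable_exp_shift hb).const_mul c1
      refine h0.congr (ae_of_all _ fun t => ?_)
      simp only [hH, if_neg hji]
      ring
  have hint_prod : ∀ i, Integrable (fun x : Fin k → ℝ => ∏ j, H i j (x j)) := fun i =>
    Integrable.fintype_prod_dep (fun j => hint_Hij i j)
  -- transfer to pi space
  set G : (Fin k → ℝ) → ℝ := fun x => Real.sqrt (∑ i, (x i)^2) * ∏ i, g i (x i) with hG
  have htrans : ∫ z : EuclideanSpace ℝ (Fin k), ‖z‖ * gaussDensity k μ Δt z
      = ∫ x : Fin k → ℝ, G x := by
    have hmp := EuclideanSpace.volume_preserving_symm_measurableEquiv_toLp (Fin k)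
    rw [← hmp.integral_comp (MeasurableEquiv.measurableEmbedding _) G]
    refine integral_congr_ae (ae_of_all _ fun z => ?_)
    simp only [Function.comp_apply]
    rw [hnormz z, hdens z, hG]
    rfl
  rw [htrans]
  -- pointwise bound and integrability
  have hgnonneg : ∀ j (t : ℝ), 0 ≤ g j t := fun j t =>
    mul_nonneg hc1pos.le (Real.exp_pos _).le
  have hGnonneg : ∀ x, 0 ≤ G x := fun x =>
    mul_nonneg (Real.sqrt_nonneg _) (Finset.prod_nonneg fun j _ => hgnonneg j (x j))
  have hpoint : ∀ x : Fin k → ℝ, G x ≤ ∑ i, ∏ j, H i j (x j) := by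
    intro x
    have h1 : Real.sqrt (∑ i, (x i)^2) ≤ ∑ i, |x i| := by
      have e : ∑ i, (x i)^2 = ∑ i, |x i|^2 := by
        refine Finset.sum_congr rfl fun i _ => (sq_abs _).symm
      rw [e]
      calc Real.sqrt (∑ i, |x i|^2)
          ≤ Real.sqrt ((∑ i, |x i|)^2) :=
            Real.sqrt_le_sqrt (Finset.sum_sq_le_sq_sum_of_nonneg fun i _ => abs_nonneg _)
        _ = ∑ i, |x i| := Real.sqrt_sq (Finset.sum_nonneg fun i _ => abs_nonneg _)
    have hP : 0 ≤ ∏ j, g j (x j) := Finset.prod_nonneg fun j _ => hgnonneg j (x j)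
    calc G x ≤ (∑ i, |x i|) * ∏ j, g j (x j) := mul_le_mul_of_nonneg_right h1 hP
      _ = ∑ i, |x i| * ∏ j, g j (x j) := Finset.sum_mul _ _ _
      _ = ∑ i, ∏ j, H i j (x j) := by
          refine Finset.sum_congr rfl fun i _ => (hprodH i x).symm
  have step1 : ∫ x : Fin k → ℝ, G x ≤ ∫ x : Fin k → ℝ, ∑ i, ∏ j, H i j (x j) :=
    integral_mono_of_nonneg (ae_of_all _ hGnonneg)
      (integrable_finset_sum _ fun i _ => hint_prod i) (ae_of_all _ hpoint)
  have step2 : ∫ x : Fin k → ℝ, ∑ i, ∏ j, H i j (x j)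
      = ∑ i, ∫ x : Fin k → ℝ, ∏ j, H i j (x j) :=
    integral_finset_sum _ fun i _ => hint_prod i
  -- one-dimensional integrals
  have hint_one : ∀ i j, j ≠ i → ∫ t : ℝ, H i j t = 1 := by
    intro i j hji
    have e : (fun t : ℝ => H i j t) = fun t => c1 * Real.exp (-b * (t - m j)^2) := by
      ext t
      rw [hH]
      simp only [if_neg hji]
      ring
    rw [e]
    have := gauss_norm_one (Δt := Δt) (m := m j) hΔt
    rw [hc1, hb_def]
    convert this using 3
  have step3 : ∀ i, ∫ x : Fin k → ℝ, ∏ j, H i j (x j) = ∫ t : ℝ, H i i t := by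
    intro i
    rw [MeasureTheory.integral_fintype_prod_volume_eq_prod (ι := Fin k) (H i)]
    exact Finset.prod_eq_single_of_mem i (Finset.mem_univ i) fun j _ hji => hint_one i j hji
  -- constants
  have hc1sqrt : c1 * Real.sqrt (π / b) = 1 := by
    rw [hc1, hb_def, gauss_norm_lemma hΔt,
      show π / (2*Δt)⁻¹ = 2 * π * Δt by field_simp]
    exact inv_mul_cancel₀ (by positivity)
  have hc1b : c1 * b⁻¹ = Real.sqrt (2 * Δt / π) := by
    rw [hc1, hb_def, gauss_norm_lemma hΔt, inv_inv]
    have key : Real.sqrt (2*Δt/π) * Real.sqrt (2*π*Δt) = 2*Δt := by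
      rw [← Real.sqrt_mul (by positivity)]
      rw [show 2*Δt/π*(2*π*Δt) = (2*Δt)^2 by field_simp]
      exact Real.sqrt_sq (by positivity)
    have hne : Real.sqrt (2*π*Δt) ≠ 0 := by positivity
    rw [mul_comm, ← div_eq_mul_inv, div_eq_iff hne, key]
  -- per-coordinate bound
  have hViV : ∀ i, |V i| ≤ ‖V‖ := by
    intro i
    rw [hnormz V]
    have : |V i| = Real.sqrt ((V i)^2) := (Real.sqrt_sq_eq_abs _).symm
    rw [this]
    exact Real.sqrt_le_sqrt (Finset.single_le_sum (fun j _ => sq_nonneg (V j))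
      (Finset.mem_univ i))
  have step4 : ∀ i : Fin k, ∫ t : ℝ, H i i t
      ≤ Real.sqrt (2 / π) * Real.sqrt Δt * Real.exp (-‖V‖^2 * Δt / 2) + ‖V‖ * Δt := by
    intro i
    have e : (fun t : ℝ => H i i t) = fun t => c1 * (|t| * Real.exp (-b * (t - m i)^2)) := by
      ext t
      simp only [hH, eq_self_iff_true, if_true]
      ring
    rw [e, integral_const_mul]
    have hbd := abs_moment_bound (b := b) (m := m i) hb
    have h5 : c1 * ∫ t : ℝ, |t| * Real.exp (-b * (t - m i)^2)
        ≤ c1 * (|m i| * Real.sqrt (π / b) + Real.exp (-b * (m i)^2) * b⁻¹) :=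
      mul_le_mul_of_nonneg_left hbd hc1pos.le
    have h6 : c1 * (|m i| * Real.sqrt (π / b) + Real.exp (-b * (m i)^2) * b⁻¹)
        = |m i| + Real.sqrt (2 * Δt / π) * Real.exp (-b * (m i)^2) := by
      rw [mul_add]
      congr 1
      · rw [show c1 * (|m i| * Real.sqrt (π / b)) = |m i| * (c1 * Real.sqrt (π / b)) by ring,
          hc1sqrt, mul_one]
      · rw [show c1 * (Real.exp (-b * (m i)^2) * b⁻¹)
            = (c1 * b⁻¹) * Real.exp (-b * (m i)^2) by ring, hc1b]
    have h7 : |m i| = Δt * |V i| := by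
      rw [hm]
      simp only
      rw [abs_neg, abs_mul, abs_of_pos hΔt]
    have h8 : -b * (m i)^2 = -(Δt * |V i|^2 / 2) := by
      rw [hm, hb_def]
      simp only
      rw [sq_abs]
      field_simp
    have h9 := percoord (s := |V i|) (S := ‖V‖) hΔt (abs_nonneg _) (hViV i)
    have h10 : -(Δt * ‖V‖^2 / 2) = -‖V‖^2 * Δt / 2 := by ring
    calc c1 * ∫ t : ℝ, |t| * Real.exp (-b * (t - m i)^2)
        ≤ |m i| + Real.sqrt (2 * Δt / π) * Real.exp (-b * (m i)^2) := by
          rw [← h6]; exact h5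
      _ = Δt * |V i| + Real.sqrt (2 * Δt / π) * Real.exp (-(Δt * |V i|^2 / 2)) := by
          rw [h7, h8]
      _ ≤ Real.sqrt (2 / π) * Real.sqrt Δt * Real.exp (-(Δt * ‖V‖^2 / 2)) + ‖V‖ * Δt := h9
      _ = Real.sqrt (2 / π) * Real.sqrt Δt * Real.exp (-‖V‖^2 * Δt / 2) + ‖V‖ * Δt := by
          rw [h10]
  -- combine
  calc ∫ x : Fin k → ℝ, G x
      ≤ ∑ i, ∫ x : Fin k → ℝ, ∏ j, H i j (x j) := by rw [← step2]; exact step1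
    _ = ∑ i : Fin k, ∫ t : ℝ, H i i t := Finset.sum_congr rfl fun i _ => step3 i
    _ ≤ ∑ _i : Fin k, (Real.sqrt (2 / π) * Real.sqrt Δt * Real.exp (-‖V‖^2 * Δt / 2)
          + ‖V‖ * Δt) := Finset.sum_le_sum fun i _ => step4 i
    _ = (k : ℝ) * Real.sqrt (2 / π) * Real.sqrt Δt * Real.exp (-‖V‖^2 * Δt / 2)
          + (k : ℝ) * ‖V‖ * Δt := by
        rw [Finset.sum_const, Finset.card_univ, Fintype.card_fin, nsmul_eq_mul]
        ring
end

section
/- Let k ≥ 1, x ∈ ℝ^k, V ∈ ℝ^k, G ∈ ℝ, Δt > 0, and L ≥ 0. Let u : ℝ^k → ℝ be differentiable with ‖∇u(y)‖ ≤ L for all y ∈ ℝ^k. Define the DFLM target operator value (T u)(x) = ∫_{ℝ^k} u(x−z)·f_{−V·Δt, Δt}(z) dz − G·Δt. Then the pointwise learning amount in one bootstrapping iteration satisfies |(T u)(x) − u(x)| ≤ L·(C₁·√Δt + C₂·‖V‖·Δt) + |G|·Δt, with constants C₁ = k·√(2/π) and C₂ = k. -/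
open MeasureTheory Real

/-! ### One-dimensional Gaussian lemmas -/

noncomputable def psi (v t : ℝ) : ℝ :=
  (2 * Real.pi * v) ^ (-(1:ℝ) / 2) * Real.exp (-t ^ 2 / (2 * v))

lemma psi_nonneg {v : ℝ} (hv : 0 < v) (t : ℝ) : 0 ≤ psi v t := by
  unfold psi; positivity

lemma exp_eq {v : ℝ} (hv : 0 < v) :
    (fun t : ℝ => Real.exp (-t ^ 2 / (2 * v))) = fun t => Real.exp (-((2*v)⁻¹) * t ^ 2) := by
  ext t; congr 1; field_simp

lemma integrable_psi {v : ℝ} (hv : 0 < v) : Integrable (psi v) := by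
  unfold psi
  apply Integrable.const_mul
  rw [exp_eq hv]
  exact integrable_exp_neg_mul_sq (by positivity)

lemma integral_psi {v : ℝ} (hv : 0 < v) : ∫ t, psi v t = 1 := by
  unfold psi
  rw [MeasureTheory.integral_const_mul, exp_eq hv, integral_gaussian]
  have h2 : (0:ℝ) < 2 * Real.pi * v := by positivity
  have : Real.pi / (2*v)⁻¹ = 2 * Real.pi * v := by field_simp
  rw [this, show ((-1:ℝ)/2) = -(1/2 : ℝ) by norm_num, Real.rpow_neg h2.le,
    Real.sqrt_eq_rpow, inv_mul_cancel₀ (by positivity)]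

lemma integral_Ioi_mul_exp {b : ℝ} (hb : 0 < b) :
    ∫ t in Set.Ioi (0:ℝ), t * Real.exp (-b * t ^ 2) = (2*b)⁻¹ := by
  have hderiv : ∀ t ∈ Set.Ici (0:ℝ),
      HasDerivAt (fun s : ℝ => -(2*b)⁻¹ * Real.exp (-b * s ^ 2))
        (t * Real.exp (-b * t ^ 2)) t := by
    intro t _
    have h1 : HasDerivAt (fun s : ℝ => -b * s ^ 2) (-b * (2 * t)) t := by
      simpa using ((hasDerivAt_pow 2 t).const_mul (-b))
    have h2 := (h1.exp).const_mul (-(2*b)⁻¹)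
    refine h2.congr_deriv ?_
    have hb' : b ≠ 0 := hb.ne'
    field_simp
  have htend : Filter.Tendsto (fun s : ℝ => -(2*b)⁻¹ * Real.exp (-b * s ^ 2))
      Filter.atTop (nhds 0) := by
    have : Filter.Tendsto (fun s : ℝ => Real.exp (-b * s ^ 2)) Filter.atTop (nhds 0) := by
      apply Real.tendsto_exp_atBot.comp
      apply Filter.Tendsto.const_mul_atTop_of_neg (by linarith : -b < 0)
      exact (Filter.tendsto_pow_atTop (n := 2) (by norm_num)).comp Filter.tendsto_id |>.congr
        (by simp)
    simpa using this.const_mul (-(2*b)⁻¹)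
  have := MeasureTheory.integral_Ioi_of_hasDerivAt_of_tendsto' hderiv
    ((integrable_mul_exp_neg_mul_sq hb).integrableOn) htend
  rw [this]
  simp

lemma integrable_abs_mul_exp {b : ℝ} (hb : 0 < b) :
    Integrable (fun t : ℝ => |t| * Real.exp (-b * t ^ 2)) := by
  have := (integrable_mul_exp_neg_mul_sq hb).abs
  simpa [abs_mul, abs_of_pos (Real.exp_pos _)] using this

lemma integrable_abs_psi {v : ℝ} (hv : 0 < v) :
    Integrable (fun t : ℝ => |t| * psi v t) := by
  unfold psi
  have h := (integrable_abs_mul_exp (b := (2*v)⁻¹) (by positivity)).const_mul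
    ((2 * Real.pi * v) ^ (-(1:ℝ)/2))
  refine h.congr ?_
  refine Filter.Eventually.of_forall fun t => ?_
  have : Real.exp (-((2*v)⁻¹) * t ^ 2) = Real.exp (-t ^ 2 / (2 * v)) := by
    congr 1; field_simp
  dsimp only
  rw [this]; ring

lemma integral_abs_psi {v : ℝ} (hv : 0 < v) :
    ∫ t, |t| * psi v t = Real.sqrt (2 / Real.pi) * Real.sqrt v := by
  unfold psi
  have hb : (0:ℝ) < (2*v)⁻¹ := by positivity
  have h1 : (fun t : ℝ => |t| * ((2 * Real.pi * v) ^ (-(1:ℝ)/2) * Real.exp (-t^2/(2*v))))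
      = fun t => (2 * Real.pi * v) ^ (-(1:ℝ)/2) * (|t| * Real.exp (-((2*v)⁻¹) * t^2)) := by
    ext t
    have : Real.exp (-((2*v)⁻¹) * t ^ 2) = Real.exp (-t ^ 2 / (2 * v)) := by
      congr 1; field_simp
    rw [this]; ring
  rw [h1, MeasureTheory.integral_const_mul]
  have h2 : ∫ t : ℝ, |t| * Real.exp (-((2*v)⁻¹) * t^2) = 2 * v := by
    have hc := _root_.integral_comp_abs
      (f := fun s : ℝ => s * Real.exp (-((2*v)⁻¹) * s ^ 2))
    simp only [sq_abs] at hc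
    rw [hc, integral_Ioi_mul_exp hb]
    field_simp
  rw [h2]
  have h3 : (0:ℝ) < 2 * Real.pi * v := by positivity
  rw [show ((-1:ℝ)/2) = -(1/2 : ℝ) by norm_num, Real.rpow_neg h3.le, ← Real.sqrt_eq_rpow]
  have hs : (0:ℝ) < Real.sqrt (2 * Real.pi * v) := Real.sqrt_pos.2 h3
  rw [inv_mul_eq_div, div_eq_iff hs.ne']
  rw [← Real.sqrt_mul (by positivity), ← Real.sqrt_mul (by positivity)]
  rw [show 2 / Real.pi * v * (2 * Real.pi * v) = (2*v)^2 by
    field_simp]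
  rw [Real.sqrt_sq (by positivity)]

/-! ### Product structure of the multivariate density -/

lemma gauss_prod {k : ℕ} (μ : EuclideanSpace ℝ (Fin k)) {v : ℝ} (hv : 0 < v)
    (z : EuclideanSpace ℝ (Fin k)) :
    gaussDensity k μ v z = ∏ i, psi v (z i - μ i) := by
  unfold gaussDensity psi
  rw [Finset.prod_mul_distrib]
  have h3 : (0:ℝ) < 2 * Real.pi * v := by positivity
  congr 1
  · rw [Finset.prod_const, Finset.card_univ, Fintype.card_fin,
      ← Real.rpow_natCast ((2 * Real.pi * v) ^ (-(1:ℝ)/2)) k, ← Real.rpow_mul h3.le]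
    congr 1
    ring
  · rw [← Real.exp_sum]
    congr 1
    have hnorm : ‖z - μ‖ ^ 2 = ∑ i, (z i - μ i) ^ 2 := by
      rw [EuclideanSpace.norm_eq, Real.sq_sqrt (Finset.sum_nonneg fun i _ => by positivity)]
      refine Finset.sum_congr rfl fun i _ => ?_
      rw [Real.norm_eq_abs, sq_abs]
      rfl
    rw [hnorm]
    simp only [← Finset.sum_div, ← Finset.sum_neg_distrib, neg_div]
    rw [Finset.sum_div]
    exact Finset.sum_congr rfl fun i _ => (neg_div _ _)

/-! ### Transfer to the pi space -/

section Transfer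

variable {k : ℕ}

lemma integral_euclidean (F : EuclideanSpace ℝ (Fin k) → ℝ) :
    ∫ z : EuclideanSpace ℝ (Fin k), F z
      = ∫ y : Fin k → ℝ, F ((MeasurableEquiv.toLp 2 (Fin k → ℝ)) y) :=
  (((EuclideanSpace.volume_preserving_symm_measurableEquiv_toLp (Fin k)).symm
    (MeasurableEquiv.toLp 2 (Fin k → ℝ)).symm).integral_comp' F).symm

lemma integrable_euclidean_iff (F : EuclideanSpace ℝ (Fin k) → ℝ) :
    Integrable F ↔
      Integrable (fun y : Fin k → ℝ => F ((MeasurableEquiv.toLp 2 (Fin k → ℝ)) y)) :=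
  (MeasurePreserving.integrable_comp_emb
    ((EuclideanSpace.volume_preserving_symm_measurableEquiv_toLp (Fin k)).symm
      (MeasurableEquiv.toLp 2 (Fin k → ℝ)).symm)
    ((MeasurableEquiv.toLp 2 (Fin k → ℝ)).measurableEmbedding)).symm

end Transfer

/-! ### Integrals of the multivariate density -/

section Multivariate

variable {k : ℕ} (μ : EuclideanSpace ℝ (Fin k)) {v : ℝ}

lemma integrable_gauss (hv : 0 < v) : Integrable (gaussDensity k μ v) := by
  rw [integrable_euclidean_iff]
  have : (fun y : Fin k → ℝ => gaussDensity k μ v ((MeasurableEquiv.toLp 2 (Fin k → ℝ)) y))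
      = fun y => ∏ i, psi v (y i - μ i) := by
    ext y
    rw [gauss_prod μ hv]
    rfl
  rw [this]
  exact Integrable.fintype_prod fun i => (integrable_psi hv).comp_sub_right (μ i)

lemma integral_gauss (hv : 0 < v) : ∫ z, gaussDensity k μ v z = 1 := by
  rw [integral_euclidean]
  have : (fun y : Fin k → ℝ => gaussDensity k μ v ((MeasurableEquiv.toLp 2 (Fin k → ℝ)) y))
      = fun y => ∏ i, psi v (y i - μ i) := by
    ext y
    rw [gauss_prod μ hv]
    rfl
  rw [this, integral_fintype_prod_volume_eq_prod (f := fun i (t : ℝ) => psi v (t - μ i))]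
  refine Finset.prod_eq_one fun i _ => ?_
  rw [integral_sub_right_eq_self (psi v) (μ i), integral_psi hv]

/-- product with the coordinate deviation -/
lemma coord_facts (hv : 0 < v) (i₀ : Fin k) :
    Integrable (fun z : EuclideanSpace ℝ (Fin k) => |z i₀ - μ i₀| * gaussDensity k μ v z) ∧
      ∫ z : EuclideanSpace ℝ (Fin k), |z i₀ - μ i₀| * gaussDensity k μ v z
        = Real.sqrt (2 / Real.pi) * Real.sqrt v := by
  classical
  set g : Fin k → ℝ → ℝ :=
    fun i t => (if i = i₀ then |t - μ i| else 1) * psi v (t - μ i) with hg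
  have hgi : ∀ i, Integrable (g i) := by
    intro i
    by_cases h : i = i₀
    · subst h
      simpa [hg] using (integrable_abs_psi hv).comp_sub_right (μ i)
    · simpa [hg, h] using (integrable_psi hv).comp_sub_right (μ i)
  have hprod : ∀ y : Fin k → ℝ,
      (∏ i, g i (y i)) = |y i₀ - μ i₀| * ∏ i, psi v (y i - μ i) := by
    intro y
    rw [hg]
    rw [Finset.prod_mul_distrib]
    congr 1
    simp [Finset.prod_ite_eq']
  have hrw : (fun y : Fin k → ℝ =>
      |((MeasurableEquiv.toLp 2 (Fin k → ℝ)) y) i₀ - μ i₀|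
        * gaussDensity k μ v ((MeasurableEquiv.toLp 2 (Fin k → ℝ)) y))
      = fun y => ∏ i, g i (y i) := by
    ext y
    rw [gauss_prod μ hv, show ((MeasurableEquiv.toLp 2 (Fin k → ℝ)) y) i₀ = y i₀ from rfl,
      hprod y]
    rfl
  constructor
  · rw [integrable_euclidean_iff]
    have := Integrable.fintype_prod (f := g) hgi
    rw [show (fun y : Fin k → ℝ =>
        |((MeasurableEquiv.toLp 2 (Fin k → ℝ)) y) i₀ - μ i₀|
          * gaussDensity k μ v ((MeasurableEquiv.toLp 2 (Fin k → ℝ)) y))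
        = fun y => ∏ i, g i (y i) from hrw] at *
    exact this
  · rw [integral_euclidean, show (fun y : Fin k → ℝ =>
        |((MeasurableEquiv.toLp 2 (Fin k → ℝ)) y) i₀ - μ i₀|
          * gaussDensity k μ v ((MeasurableEquiv.toLp 2 (Fin k → ℝ)) y))
        = fun y => ∏ i, g i (y i) from hrw]
    rw [integral_fintype_prod_volume_eq_prod (f := g)]
    have hint : ∀ i, (∫ t, g i t)
        = if i = i₀ then Real.sqrt (2 / Real.pi) * Real.sqrt v else 1 := by
      intro i
      by_cases h : i = i₀
      · simp only [hg, h, if_true]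
        rw [show (fun t : ℝ => |t - μ i₀| * psi v (t - μ i₀))
            = fun t => (fun s => |s| * psi v s) (t - μ i₀) from rfl,
          integral_sub_right_eq_self (fun s => |s| * psi v s) (μ i₀), integral_abs_psi hv]
      · simp only [hg, h, if_false, one_mul]
        rw [integral_sub_right_eq_self (psi v) (μ i), integral_psi hv]
    rw [Finset.prod_congr rfl fun i _ => hint i]
    simp [Finset.prod_ite_eq']
end Multivariate

/-- Pointwise learning amount of one DFLM bootstrapping iteration:
if `‖∇u‖ ≤ L` everywhere and `(T u)(x) = ∫ u(x−z)·f_{−VΔt,Δt}(z) dz − G·Δt`, then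
`|(T u)(x) − u(x)| ≤ L·(C₁√Δt + C₂‖V‖Δt) + |G|Δt` with `C₁ = k√(2/π)`, `C₂ = k`. -/
theorem dflm_pointwise_learning_bound (k : ℕ) (hk : 1 ≤ k)
    (x V : EuclideanSpace ℝ (Fin k)) (G : ℝ) (Δt : ℝ) (hΔt : 0 < Δt)
    (L : ℝ) (hL : 0 ≤ L)
    (u : EuclideanSpace ℝ (Fin k) → ℝ) (hu : Differentiable ℝ u)
    (hgrad : ∀ y : EuclideanSpace ℝ (Fin k), ‖fderiv ℝ u y‖ ≤ L) :
    |((∫ z : EuclideanSpace ℝ (Fin k), u (x - z) * gaussDensity k (-(Δt • V)) Δt z)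
        - G * Δt) - u x| ≤
      L * ((k : ℝ) * Real.sqrt (2 / Real.pi) * Real.sqrt Δt + (k : ℝ) * ‖V‖ * Δt)
        + |G| * Δt := by
  set μ : EuclideanSpace ℝ (Fin k) := -(Δt • V) with hμ
  set f : EuclideanSpace ℝ (Fin k) → ℝ := gaussDensity k μ Δt with hf
  have hμnorm : ‖μ‖ = Δt * ‖V‖ := by
    rw [hμ, norm_neg, norm_smul, Real.norm_eq_abs, abs_of_pos hΔt]
  have hf0 : ∀ z, 0 ≤ f z := by
    intro z
    rw [hf, gauss_prod μ hΔt]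
    exact Finset.prod_nonneg fun i _ => psi_nonneg hΔt _
  have hfc : Continuous f := by
    rw [hf]
    unfold gaussDensity
    exact continuous_const.mul (((((continuous_id.sub continuous_const).norm.pow 2).neg).div_const
      _).rexp)
  have hLip : ∀ a b : EuclideanSpace ℝ (Fin k), |u a - u b| ≤ L * ‖a - b‖ := by
    intro a b
    have := Convex.norm_image_sub_le_of_norm_fderiv_le (f := u) (C := L) (s := Set.univ)
      (fun y _ => hu y) (fun y _ => hgrad y) convex_univ
      (Set.mem_univ b) (Set.mem_univ a)
    simpa [Real.norm_eq_abs] using this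
  -- integrability facts
  have hIf : Integrable f := integrable_gauss μ hΔt
  have hIcoord : ∀ i, Integrable (fun z : EuclideanSpace ℝ (Fin k) => |z i - μ i| * f z) :=
    fun i => (coord_facts μ hΔt i).1
  have hIsum : Integrable (fun z : EuclideanSpace ℝ (Fin k) => ∑ i, |z i - μ i| * f z) :=
    integrable_finset_sum _ fun i _ => hIcoord i
  have hle : ∀ z : EuclideanSpace ℝ (Fin k), ‖z - μ‖ ≤ ∑ i, |z i - μ i| := by
    intro z
    rw [EuclideanSpace.norm_eq]
    have h1 : ∑ i, ‖(z - μ) i‖ ^ 2 ≤ (∑ i, |z i - μ i|) ^ 2 := by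
      have := Finset.sum_sq_le_sq_sum_of_nonneg
        (s := Finset.univ) (f := fun i => |z i - μ i|) (fun i _ => abs_nonneg _)
      convert this using 2 with i
      · rfl
      · simp [Real.norm_eq_abs]
    calc Real.sqrt (∑ i, ‖(z - μ) i‖ ^ 2) ≤ Real.sqrt ((∑ i, |z i - μ i|) ^ 2) :=
          Real.sqrt_le_sqrt h1
      _ = ∑ i, |z i - μ i| := Real.sqrt_sq (Finset.sum_nonneg fun i _ => abs_nonneg _)
  have hInorm : Integrable (fun z : EuclideanSpace ℝ (Fin k) => ‖z - μ‖ * f z) := by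
    refine hIsum.mono' ?_ ?_
    · exact ((continuous_id.sub continuous_const).norm.mul hfc).aestronglyMeasurable
    · refine Filter.Eventually.of_forall fun z => ?_
      rw [Real.norm_eq_abs, abs_of_nonneg (mul_nonneg (norm_nonneg _) (hf0 z)),
        ← Finset.sum_mul]
      exact mul_le_mul_of_nonneg_right (hle z) (hf0 z)
  -- bound on ∫ ‖z - μ‖ f z
  have hIub : ∫ z : EuclideanSpace ℝ (Fin k), ‖z - μ‖ * f z
      ≤ (k : ℝ) * (Real.sqrt (2 / Real.pi) * Real.sqrt Δt) := by
    calc ∫ z : EuclideanSpace ℝ (Fin k), ‖z - μ‖ * f z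
        ≤ ∫ z : EuclideanSpace ℝ (Fin k), ∑ i, |z i - μ i| * f z := by
          refine integral_mono hInorm hIsum fun z => ?_
          rw [← Finset.sum_mul]
          exact mul_le_mul_of_nonneg_right (hle z) (hf0 z)
      _ = ∑ i : Fin k, ∫ z : EuclideanSpace ℝ (Fin k), |z i - μ i| * f z :=
          integral_finset_sum _ fun i _ => hIcoord i
      _ = (k : ℝ) * (Real.sqrt (2 / Real.pi) * Real.sqrt Δt) := by
          rw [Finset.sum_congr rfl fun i _ => (coord_facts μ hΔt i).2]
          simp [Finset.sum_const, mul_comm]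
  -- integrability of the integrand
  have hubound : ∀ z : EuclideanSpace ℝ (Fin k),
      |u (x - z)| ≤ |u x| + L * (‖z - μ‖ + ‖μ‖) := by
    intro z
    have h1 : |u (x - z) - u x| ≤ L * ‖z‖ := by
      have := hLip (x - z) x
      simpa [norm_neg] using this
    have h2 : ‖z‖ ≤ ‖z - μ‖ + ‖μ‖ := by
      simpa using norm_add_le (z - μ) μ
    have h3 : |u (x - z)| ≤ |u x| + |u (x - z) - u x| := by
      have := abs_add_le (u x) (u (x - z) - u x)
      simpa [add_comm] using this
    have h4 : L * ‖z‖ ≤ L * (‖z - μ‖ + ‖μ‖) := mul_le_mul_of_nonneg_left h2 hL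
    linarith
  have hIg : Integrable (fun z : EuclideanSpace ℝ (Fin k) =>
      (|u x| + L * ‖μ‖) * f z + L * (‖z - μ‖ * f z)) :=
    (hIf.const_mul _).add (hInorm.const_mul L)
  have hIu : Integrable (fun z : EuclideanSpace ℝ (Fin k) => u (x - z) * f z) := by
    refine hIg.mono' ?_ ?_
    · exact ((hu.continuous.comp (continuous_const.sub continuous_id)).mul
        hfc).aestronglyMeasurable
    · refine Filter.Eventually.of_forall fun z => ?_
      rw [Real.norm_eq_abs, abs_mul, abs_of_nonneg (hf0 z)]
      have := mul_le_mul_of_nonneg_right (hubound z) (hf0 z)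
      have hfz := hf0 z
      nlinarith [norm_nonneg (z - μ), norm_nonneg μ, abs_nonneg (u x)]
  -- the difference as an integral
  have hdiff : (∫ z : EuclideanSpace ℝ (Fin k), u (x - z) * f z) - u x
      = ∫ z : EuclideanSpace ℝ (Fin k), (u (x - z) - u x) * f z := by
    have heq : (fun z : EuclideanSpace ℝ (Fin k) => (u (x - z) - u x) * f z)
        = fun z => u (x - z) * f z - u x * f z := by ext z; ring
    rw [heq, integral_sub hIu (hIf.const_mul (u x)), MeasureTheory.integral_const_mul,
      hf, integral_gauss μ hΔt, mul_one]
  -- bound the main term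
  have hmain : |(∫ z : EuclideanSpace ℝ (Fin k), u (x - z) * f z) - u x|
      ≤ L * ((k : ℝ) * Real.sqrt (2 / Real.pi) * Real.sqrt Δt + (k : ℝ) * ‖V‖ * Δt) := by
    rw [hdiff]
    have hIdom : Integrable (fun z : EuclideanSpace ℝ (Fin k) =>
        L * (‖z - μ‖ * f z) + (L * ‖μ‖) * f z) :=
      (hInorm.const_mul L).add (hIf.const_mul _)
    have step1 : |∫ z : EuclideanSpace ℝ (Fin k), (u (x - z) - u x) * f z|
        ≤ ∫ z : EuclideanSpace ℝ (Fin k), L * (‖z - μ‖ * f z) + (L * ‖μ‖) * f z := by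
      have habs : |∫ z : EuclideanSpace ℝ (Fin k), (u (x - z) - u x) * f z|
          ≤ ∫ z : EuclideanSpace ℝ (Fin k), |(u (x - z) - u x) * f z| := by
        simpa only [Real.norm_eq_abs] using norm_integral_le_integral_norm
          (f := fun z : EuclideanSpace ℝ (Fin k) => (u (x - z) - u x) * f z) (μ := volume)
      refine habs.trans ?_
      refine integral_mono_of_nonneg (Filter.Eventually.of_forall fun z => abs_nonneg _)
        hIdom (Filter.Eventually.of_forall fun z => ?_)
      dsimp only
      rw [abs_mul, abs_of_nonneg (hf0 z)]
      have h1 : |u (x - z) - u x| ≤ L * ‖z‖ := by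
        have := hLip (x - z) x
        simpa [norm_neg] using this
      have h2 : ‖z‖ ≤ ‖z - μ‖ + ‖μ‖ := by simpa using norm_add_le (z - μ) μ
      have h4 : |u (x - z) - u x| ≤ L * (‖z - μ‖ + ‖μ‖) :=
        h1.trans (mul_le_mul_of_nonneg_left h2 hL)
      have := mul_le_mul_of_nonneg_right h4 (hf0 z)
      calc |u (x - z) - u x| * f z ≤ (L * (‖z - μ‖ + ‖μ‖)) * f z := this
        _ = L * (‖z - μ‖ * f z) + (L * ‖μ‖) * f z := by ring
    have step2 : ∫ z : EuclideanSpace ℝ (Fin k), L * (‖z - μ‖ * f z) + (L * ‖μ‖) * f z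
        ≤ L * ((k : ℝ) * Real.sqrt (2 / Real.pi) * Real.sqrt Δt + (k : ℝ) * ‖V‖ * Δt) := by
      rw [integral_add (hInorm.const_mul L) (hIf.const_mul _),
        MeasureTheory.integral_const_mul, MeasureTheory.integral_const_mul,
        hf, integral_gauss μ hΔt, mul_one]
      have t1 : L * ∫ z : EuclideanSpace ℝ (Fin k), ‖z - μ‖ * f z
          ≤ L * ((k : ℝ) * (Real.sqrt (2 / Real.pi) * Real.sqrt Δt)) :=
        mul_le_mul_of_nonneg_left hIub hL
      have t2 : L * ‖μ‖ ≤ L * ((k : ℝ) * ‖V‖ * Δt) := by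
        apply mul_le_mul_of_nonneg_left _ hL
        rw [hμnorm]
        have hk1 : (1 : ℝ) ≤ (k : ℝ) := by exact_mod_cast hk
        nlinarith [mul_nonneg (mul_nonneg (sub_nonneg.2 hk1) (norm_nonneg V)) hΔt.le]
      calc L * (∫ z : EuclideanSpace ℝ (Fin k), ‖z - μ‖ * f z) + L * ‖μ‖
          ≤ L * ((k : ℝ) * (Real.sqrt (2 / Real.pi) * Real.sqrt Δt))
            + L * ((k : ℝ) * ‖V‖ * Δt) := add_le_add t1 t2
        _ = L * ((k : ℝ) * Real.sqrt (2 / Real.pi) * Real.sqrt Δt + (k : ℝ) * ‖V‖ * Δt) := by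
            ring
    exact step1.trans step2
  -- conclude
  have hsplit : (∫ z : EuclideanSpace ℝ (Fin k), u (x - z) * f z) - G * Δt - u x
      = ((∫ z : EuclideanSpace ℝ (Fin k), u (x - z) * f z) - u x) + (-(G * Δt)) := by ring
  calc |(∫ z : EuclideanSpace ℝ (Fin k), u (x - z) * f z) - G * Δt - u x|
      ≤ |(∫ z : EuclideanSpace ℝ (Fin k), u (x - z) * f z) - u x| + |(-(G * Δt))| := by
        rw [hsplit]; exact abs_add_le _ _
    _ ≤ L * ((k : ℝ) * Real.sqrt (2 / Real.pi) * Real.sqrt Δt + (k : ℝ) * ‖V‖ * Δt)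
        + |G| * Δt := by
        refine add_le_add hmain ?_
        rw [abs_neg, abs_mul, abs_of_pos hΔt]
end
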